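/- Suppose {q_n} is a sequence of positive reals such that the limit β = lim_{n→∞} n(1−q_n) exists in ℝ. Then for any sequence {a_n} with a_n ∈ {1,…,n} and any 0 ≤ y₁ < y₂ ≤ 1: (i) limsup_{n→∞} μ_{n,q_n}( π(a_n)/ن ∈ [y₁,y₂] ) ≤ (y₂−y₁)·e^{|β|}, and (ii) liminf_{n→∞} μ_{n,q_n}( π(a_n)/n ∈ (y₁,y₂) ) ≥ (y₂−y₁)·e^{−|β|}. -/

import Mathlib

open Filter Finset MeasureTheory

/-- Number of inversions of a permutation of `Fin n`. -/
def inversions (n : ℕ) (π : Equiv.Perm (Fin n)) : ℕ :=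
  (Finset.univ.filter (fun p : Fin n × Fin n => p.1 < p.2 ∧ π p.2 < π p.1)).card

/-- The `(n,q)`-Mallows probability mass function on `S_n`. -/
noncomputable def mallowsPMF (n : ℕ) (q : ℝ) (π : Equiv.Perm (Fin n)) : ℝ :=
  q ^ inversions n π / ∑ σ : Equiv.Perm (Fin n), q ^ inversions n σ

open Classical in
/-- The `(n,q)`-Mallows probability of an event `P` of permutations. -/
noncomputable def mallowsProb (n : ℕ) (q : ℝ) (P : Equiv.Perm (Fin n) → Prop) : ℝ :=
  ∑ π : Equiv.Perm (Fin n), if P π then mallowsPMF n q π else 0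

/-- Expectation with respect to the `(n,q)`-Mallows measure. -/
noncomputable def mallowsExp (n : ℕ) (q : ℝ) (f : Equiv.Perm (Fin n) → ℝ) : ℝ :=
  ∑ π : Equiv.Perm (Fin n), mallowsPMF n q π * f π

/-- Action of a permutation of `Fin n` on one-based indices `{1,…,n}`. -/
def permAct (n : ℕ) (π : Equiv.Perm (Fin n)) (i : ℕ) : ℕ :=
  if h : 1 ≤ i ∧ i ≤ n then ((π ⟨i - 1, by omega⟩ : Fin n) : ℕ) + 1 else i

/-- The limiting density `u(x,y,β)` from Starr's theorem. -/
noncomputable def mallowsU (x y β : ℝ) : ℝ :=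
  if β = 0 then 1
  else (β / 2) * Real.sinh (β / 2) /
    (Real.exp (β / 4) * Real.cosh (β * (x - y) / 2)
      - Real.exp (-β / 4) * Real.cosh (β * (x + y - 1) / 2)) ^ 2

lemma swap_order {n : ℕ} {c c' : Fin n} (hcc : (c:ℕ)+1 = c') {u v : Fin n}
    (huv : u ≠ v) (h1 : ¬(u = c ∧ v = c')) (h2 : ¬(u = c' ∧ v = c)) :
    (Equiv.swap c c' u < Equiv.swap c c' v ↔ u < v) := by
  simp only [Fin.lt_def]
  rw [Equiv.swap_apply_def, Equiv.swap_apply_def]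
  split_ifs <;> simp only [Fin.ext_iff, ne_eq, not_and] at * <;> omega

lemma inversions_swap_le {n : ℕ} {c c' : Fin n} (hcc : (c:ℕ)+1 = c')
    (π : Equiv.Perm (Fin n)) :
    inversions n (Equiv.swap c c' * π) ≤ inversions n π + 1 := by
  classical
  set τ := Equiv.swap c c' with hτ
  set i : Fin n := π⁻¹ c with hi
  set i' : Fin n := π⁻¹ c' with hi'
  set w : Fin n × Fin n := if i < i' then (i, i') else (i', i) with hw
  have hsub : (Finset.univ.filter fun p : Fin n × Fin n => p.1 < p.2 ∧ (τ*π) p.2 < (τ*π) p.1)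
      ⊆ (Finset.univ.filter fun p : Fin n × Fin n => p.1 < p.2 ∧ π p.2 < π p.1) ∪ {w} := by
    intro p hp
    simp only [Finset.mem_filter, Finset.mem_univ, true_and] at hp
    obtain ⟨hlt, hinv⟩ := hp
    by_cases hcase : (π p.1 = c ∧ π p.2 = c') ∨ (π p.1 = c' ∧ π p.2 = c)
    · rw [Finset.mem_union, Finset.mem_singleton]
      right
      rcases hcase with ⟨ha, hb⟩ | ⟨ha, hb⟩
      · have e1 : p.1 = i := by rw [hi, ← ha]; simp
        have e2 : p.2 = i' := by rw [hi', ← hb]; simp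
        rw [hw, if_pos (by rw [← e1, ← e2]; exact hlt)]
        exact Prod.ext e1 e2
      · have e1 : p.1 = i' := by rw [hi', ← ha]; simp
        have e2 : p.2 = i := by rw [hi, ← hb]; simp
        rw [hw, if_neg (by rw [← e1, ← e2]; exact fun h => absurd hlt (asymm h))]
        exact Prod.ext e1 e2
    · rw [Finset.mem_union]
      left
      simp only [Finset.mem_filter, Finset.mem_univ, true_and]
      refine ⟨hlt, ?_⟩
      push_neg at hcase
      have hne : π p.2 ≠ π p.1 := fun h => by
        have : p.2 = p.1 := π.injective h
        omega
      have := swap_order hcc hne (fun ⟨x, y⟩ => hcase.2 y x)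
        (fun ⟨x, y⟩ => hcase.1 y x)
      simp only [Equiv.Perm.mul_apply] at hinv
      exact this.mp hinv
  calc inversions n (τ*π) ≤ ((Finset.univ.filter fun p : Fin n × Fin n =>
          p.1 < p.2 ∧ π p.2 < π p.1) ∪ {w}).card := Finset.card_le_card hsub
    _ ≤ inversions n π + 1 := by
        refine le_trans (Finset.card_union_le _ _) ?_
        simp [inversions]

noncomputable def SS (n : ℕ) (q : ℝ) (p j : Fin n) : ℝ :=
  ∑ π ∈ Finset.univ.filter (fun π : Equiv.Perm (Fin n) => π p = j), q ^ inversions n π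

lemma SS_pos {n : ℕ} {q : ℝ} (hq : 0 < q) (p j : Fin n) : 0 < SS n q p j := by
  refine Finset.sum_pos (fun π _ => pow_pos hq _) ?_
  exact ⟨Equiv.swap p j, by simp⟩

lemma one_le_max_inv {q : ℝ} (hq : 0 < q) : 1 ≤ max q q⁻¹ := by
  rcases le_total 1 q with h | h
  · exact le_max_of_le_left h
  · exact le_max_of_le_right ((one_le_inv₀ hq).mpr h)

lemma pow_inv_bound {n : ℕ} {q : ℝ} (hq : 0 < q) {c c' : Fin n} (hcc : (c:ℕ)+1 = c')
    (π : Equiv.Perm (Fin n)) :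
    q ^ inversions n (Equiv.swap c c' * π) ≤ max q q⁻¹ * q ^ inversions n π := by
  have h1 := inversions_swap_le hcc π
  have h2 := inversions_swap_le hcc (Equiv.swap c c' * π)
  rw [← mul_assoc, Equiv.swap_mul_self, one_mul] at h2
  set d := inversions n (Equiv.swap c c' * π)
  set e := inversions n π
  have : d = e ∨ d = e + 1 ∨ e = d + 1 := by omega
  rcases this with h | h | h
  · rw [h]
    nth_rewrite 1 [← one_mul (q ^ e)]
    exact mul_le_mul_of_nonneg_right (one_le_max_inv hq) (le_of_lt (pow_pos hq _))
  · rw [h, pow_succ, mul_comm]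
    exact mul_le_mul_of_nonneg_right (le_max_left _ _) (le_of_lt (pow_pos hq _))
  · have : q ^ d = q⁻¹ * q ^ e := by
      rw [h, pow_succ]
      field_simp
    rw [this]
    exact mul_le_mul_of_nonneg_right (le_max_right _ _) (le_of_lt (pow_pos hq _))

lemma SS_swap_le {n : ℕ} {q : ℝ} (hq : 0 < q) (p : Fin n) {c c' : Fin n}
    (hcc : (c:ℕ)+1 = c') (j : Fin n) :
    SS n q p (Equiv.swap c c' j) ≤ max q q⁻¹ * SS n q p j := by
  rw [SS, SS, Finset.mul_sum]
  rw [show (Finset.univ.filter fun π : Equiv.Perm (Fin n) => π p = Equiv.swap c c' j) =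
      (Finset.univ.filter fun π : Equiv.Perm (Fin n) => π p = j).image
        (fun π => Equiv.swap c c' * π) from ?_]
  · rw [Finset.sum_image (by
      intro x _ y _ hxy
      exact mul_left_cancel hxy)]
    exact Finset.sum_le_sum (fun π _ => pow_inv_bound hq hcc π)
  · ext π
    simp only [Finset.mem_filter, Finset.mem_univ, true_and, Finset.mem_image]
    constructor
    · intro h
      refine ⟨Equiv.swap c c' * π, ?_, ?_⟩
      · simp only [Equiv.Perm.mul_apply, h, Equiv.swap_apply_self]
      · rw [← mul_assoc, Equiv.swap_mul_self, one_mul]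
    · rintro ⟨σ, hσ, rfl⟩
      simp [Equiv.Perm.mul_apply, hσ]

lemma SS_chain {n : ℕ} {q : ℝ} (hq : 0 < q) (p : Fin n) :
    ∀ d : ℕ, ∀ j k : Fin n, (j:ℕ) + d = k →
      SS n q p j ≤ (max q q⁻¹) ^ d * SS n q p k ∧
      SS n q p k ≤ (max q q⁻¹) ^ d * SS n q p j := by
  intro d
  induction d with
  | zero =>
    intro j k h
    have : j = k := Fin.ext (by omega)
    subst this
    simp
  | succ d ih =>
    intro j k h
    have hj1 : (j:ℕ) + 1 < n := by
      have := k.isLt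
      omega
    set j1 : Fin n := ⟨(j:ℕ)+1, hj1⟩ with hj1def
    have hcc : (j:ℕ) + 1 = (j1:ℕ) := rfl
    have hstep1 : SS n q p j1 ≤ max q q⁻¹ * SS n q p j := by
      have := SS_swap_le hq p hcc j
      rwa [Equiv.swap_apply_left] at this
    have hstep2 : SS n q p j ≤ max q q⁻¹ * SS n q p j1 := by
      have := SS_swap_le hq p hcc j1
      rwa [Equiv.swap_apply_right] at this
    obtain ⟨ih1, ih2⟩ := ih j1 k (by simp [hj1def]; omega)
    have hM : (0:ℝ) < max q q⁻¹ := lt_of_lt_of_le one_pos (one_le_max_inv hq)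
    constructor
    · calc SS n q p j ≤ max q q⁻¹ * SS n q p j1 := hstep2
        _ ≤ max q q⁻¹ * ((max q q⁻¹) ^ d * SS n q p k) :=
            mul_le_mul_of_nonneg_left ih1 hM.le
        _ = (max q q⁻¹) ^ (d+1) * SS n q p k := by ring
    · calc SS n q p k ≤ (max q q⁻¹) ^ d * SS n q p j1 := ih2
        _ ≤ (max q q⁻¹) ^ d * (max q q⁻¹ * SS n q p j) :=
            mul_le_mul_of_nonneg_left hstep1 (pow_pos hM d).le
        _ = (max q q⁻¹) ^ (d+1) * SS n q p j := by ring

lemma SS_le_all {n : ℕ} {q : ℝ} (hq : 0 < q) (p : Fin n) (j k : Fin n) :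
    SS n q p j ≤ (max q q⁻¹) ^ (n-1) * SS n q p k := by
  have hM1 : (1:ℝ) ≤ max q q⁻¹ := one_le_max_inv hq
  have key : ∀ d : ℕ, d ≤ n - 1 → (max q q⁻¹) ^ d * SS n q p k ≤
      (max q q⁻¹) ^ (n-1) * SS n q p k :=
    fun d hd => mul_le_mul_of_nonneg_right (pow_le_pow_right₀ hM1 hd)
      (SS_pos hq p k).le
  rcases le_total (j:ℕ) (k:ℕ) with h | h
  · obtain ⟨h1, _⟩ := SS_chain hq p ((k:ℕ) - (j:ℕ)) j k (by omega)
    have := k.isLt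
    exact h1.trans (key _ (by omega))
  · obtain ⟨_, h2⟩ := SS_chain hq p ((j:ℕ) - (k:ℕ)) k j (by omega)
    have := j.isLt
    exact h2.trans (key _ (by omega))

lemma Zpos {n : ℕ} {q : ℝ} (hq : 0 < q) :
    0 < ∑ σ : Equiv.Perm (Fin n), q ^ inversions n σ :=
  Finset.sum_pos (fun σ _ => pow_pos hq _) Finset.univ_nonempty

open Classical in
lemma mallowsProb_eq (n : ℕ) (q : ℝ) (P : Equiv.Perm (Fin n) → Prop) :
    mallowsProb n q P = (∑ π ∈ Finset.univ.filter (fun π => P π), q ^ inversions n π)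
      / ∑ σ : Equiv.Perm (Fin n), q ^ inversions n σ := by
  rw [mallowsProb, Finset.sum_filter, Finset.sum_div]
  refine Finset.sum_congr rfl (fun π _ => ?_)
  split_ifs
  · rfl
  · exact (zero_div _).symm

open Classical in
lemma Z_eq_sum_SS {n : ℕ} (q : ℝ) (p : Fin n) :
    ∑ σ : Equiv.Perm (Fin n), q ^ inversions n σ = ∑ j : Fin n, SS n q p j := by
  rw [eq_comm]
  exact Finset.sum_fiberwise_of_maps_to (fun σ _ => Finset.mem_univ (σ p)) _

open Classical in
lemma marginal_eq {n : ℕ} (q : ℝ) (p j : Fin n) :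
    mallowsProb n q (fun π => π p = j) =
      SS n q p j / ∑ σ : Equiv.Perm (Fin n), q ^ inversions n σ := by
  rw [mallowsProb_eq, SS]
  congr 1
  exact Finset.sum_congr (by ext; simp) fun _ _ => rfl

lemma marginal_le {n : ℕ} (hn : 1 ≤ n) {q : ℝ} (hq : 0 < q) (p j : Fin n) :
    mallowsProb n q (fun π => π p = j) ≤ (max q q⁻¹) ^ (n-1) / n := by
  classical
  set M := (max q q⁻¹) ^ (n-1) with hM
  have hMpos : (0:ℝ) < M := pow_pos (lt_of_lt_of_le one_pos (one_le_max_inv hq)) _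
  have hSpos := SS_pos hq p j
  have hZ_ge : (n:ℝ) * (SS n q p j / M) ≤ ∑ σ : Equiv.Perm (Fin n), q ^ inversions n σ := by
    rw [Z_eq_sum_SS q p]
    calc (n:ℝ) * (SS n q p j / M) = ∑ _k : Fin n, SS n q p j / M := by
          rw [Finset.sum_const, Finset.card_univ, Fintype.card_fin, nsmul_eq_mul]
      _ ≤ ∑ k : Fin n, SS n q p k := Finset.sum_le_sum (fun k _ =>
          (div_le_iff₀ hMpos).mpr (by rw [mul_comm]; exact SS_le_all hq p j k))
  have h1 : (0:ℝ) < (n:ℝ) * (SS n q p j / M) := by positivity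
  rw [marginal_eq]
  calc SS n q p j / ∑ σ : Equiv.Perm (Fin n), q ^ inversions n σ
      ≤ SS n q p j / ((n:ℝ) * (SS n q p j / M)) :=
        div_le_div_of_nonneg_left hSpos.le h1 hZ_ge
    _ = M / n := by field_simp

lemma marginal_ge {n : ℕ} (hn : 1 ≤ n) {q : ℝ} (hq : 0 < q) (p j : Fin n) :
    1 / ((n:ℝ) * (max q q⁻¹) ^ (n-1)) ≤ mallowsProb n q (fun π => π p = j) := by
  classical
  set M := (max q q⁻¹) ^ (n-1) with hM
  have hMpos : (0:ℝ) < M := pow_pos (lt_of_lt_of_le one_pos (one_le_max_inv hq)) _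
  have hSpos := SS_pos hq p j
  have hnpos : (0:ℝ) < n := by exact_mod_cast hn
  have hZ_le : (∑ σ : Equiv.Perm (Fin n), q ^ inversions n σ) ≤ (n:ℝ) * (M * SS n q p j) := by
    rw [Z_eq_sum_SS q p]
    calc ∑ k : Fin n, SS n q p k ≤ ∑ _k : Fin n, M * SS n q p j :=
          Finset.sum_le_sum (fun k _ => SS_le_all hq p k j)
      _ = (n:ℝ) * (M * SS n q p j) := by
          rw [Finset.sum_const, Finset.card_univ, Fintype.card_fin, nsmul_eq_mul]
  rw [marginal_eq]
  calc 1 / ((n:ℝ) * M) = SS n q p j / ((n:ℝ) * (M * SS n q p j)) := by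
        field_simp
    _ ≤ SS n q p j / ∑ σ : Equiv.Perm (Fin n), q ^ inversions n σ :=
        div_le_div_of_nonneg_left hSpos.le (Zpos hq) hZ_le

open Classical in
lemma prob_comp (n : ℕ) (q : ℝ) (p : Fin n) (E : Fin n → Prop) :
    mallowsProb n q (fun π => E (π p)) =
      ∑ j ∈ Finset.univ.filter (fun j => E j), mallowsProb n q (fun π => π p = j) := by
  rw [mallowsProb]
  have key : ∀ π : Equiv.Perm (Fin n), (if E (π p) then mallowsPMF n q π else 0) =
      ∑ j ∈ Finset.univ.filter (fun j => E j), if π p = j then mallowsPMF n q π else 0 := by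
    intro π
    rw [Finset.sum_ite_eq]
    simp only [Finset.mem_filter, Finset.mem_univ, true_and]
  simp_rw [key]
  rw [Finset.sum_comm]
  exact Finset.sum_congr rfl fun j _ => by
    rw [mallowsProb]
    exact Finset.sum_congr rfl fun π _ => by congr

lemma mallowsProb_nonneg {n : ℕ} {q : ℝ} (hq : 0 < q) (P : Equiv.Perm (Fin n) → Prop) :
    0 ≤ mallowsProb n q P := by
  classical
  rw [mallowsProb_eq]
  have h1 : (0:ℝ) ≤ ∑ π ∈ Finset.univ.filter (fun π => P π), q ^ inversions n π :=
    Finset.sum_nonneg fun π _ => (pow_pos hq _).le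
  exact div_nonneg h1 (Zpos hq).le

lemma mallowsProb_le_one {n : ℕ} {q : ℝ} (hq : 0 < q) (P : Equiv.Perm (Fin n) → Prop) :
    mallowsProb n q P ≤ 1 := by
  classical
  rw [mallowsProb_eq]
  rw [div_le_one (Zpos hq)]
  exact Finset.sum_le_sum_of_subset_of_nonneg (Finset.filter_subset _ _)
    (fun π _ _ => (pow_pos hq _).le)

lemma count_upper {n : ℕ} (hn : 1 ≤ n) {y₁ y₂ : ℝ} (hy₁ : 0 ≤ y₁) (hy₁₂ : y₁ < y₂)
    [DecidablePred fun j : Fin n => y₁ ≤ ((j:ℕ)+1)/(n:ℝ) ∧ ((j:ℕ)+1)/(n:ℝ) ≤ y₂] :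
    ((Finset.univ.filter fun j : Fin n =>
        y₁ ≤ ((j:ℕ)+1)/(n:ℝ) ∧ ((j:ℕ)+1)/(n:ℝ) ≤ y₂).card : ℝ)
      ≤ (n:ℝ)*(y₂-y₁) + 1 := by
  have hnpos : (0:ℝ) < n := by exact_mod_cast hn
  set L := ⌈(n:ℝ)*y₁⌉₊ with hL
  set U := ⌊(n:ℝ)*y₂⌋₊ with hU
  have hcard : (Finset.univ.filter fun j : Fin n =>
      y₁ ≤ ((j:ℕ)+1)/(n:ℝ) ∧ ((j:ℕ)+1)/(n:ℝ) ≤ y₂).card ≤ (Finset.Icc L U).card := by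
    refine Finset.card_le_card_of_injOn (fun j : Fin n => (j:ℕ)+1) ?_ ?_
    · intro j hj
      simp only [Finset.mem_coe, Finset.mem_filter, Finset.mem_univ, true_and] at hj ⊢
      obtain ⟨h1, h2⟩ := hj
      rw [le_div_iff₀ hnpos] at h1
      rw [div_le_iff₀ hnpos] at h2
      rw [Finset.mem_Icc]
      constructor
      · rw [hL, Nat.ceil_le]
        rw [mul_comm] at h1
        exact_mod_cast h1
      · rw [hU, Nat.le_floor_iff (by nlinarith)]
        rw [mul_comm (y₂)] at h2
        exact_mod_cast h2
    · intro x _ y _ hxy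
      exact Fin.ext (by simpa using hxy)
  have : ((Finset.Icc L U).card : ℝ) ≤ (n:ℝ)*(y₂-y₁) + 1 := by
    rw [Nat.card_Icc]
    rcases le_or_gt L (U+1) with h | h
    · rw [Nat.cast_sub h]
      have hU' : (U:ℝ) ≤ (n:ℝ)*y₂ := Nat.floor_le (by nlinarith)
      have hL' : (n:ℝ)*y₁ ≤ (L:ℝ) := Nat.le_ceil _
      push_cast
      nlinarith
    · rw [Nat.sub_eq_zero_of_le (by omega)]
      have : (0:ℝ) ≤ (n:ℝ)*(y₂-y₁) := by nlinarith
      simp only [Nat.cast_zero]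
      linarith
  calc ((Finset.univ.filter fun j : Fin n =>
        y₁ ≤ ((j:ℕ)+1)/(n:ℝ) ∧ ((j:ℕ)+1)/(n:ℝ) ≤ y₂).card : ℝ)
      ≤ ((Finset.Icc L U).card : ℝ) := by exact_mod_cast hcard
    _ ≤ (n:ℝ)*(y₂-y₁) + 1 := this

lemma count_lower {n : ℕ} (hn : 1 ≤ n) {y₁ y₂ : ℝ} (hy₁ : 0 ≤ y₁) (hy₁₂ : y₁ < y₂)
    (hy₂ : y₂ ≤ 1)
    [DecidablePred fun j : Fin n => y₁ < ((j:ℕ)+1)/(n:ℝ) ∧ ((j:ℕ)+1)/(n:ℝ) < y₂] :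
    (n:ℝ)*(y₂-y₁) - 1 ≤ ((Finset.univ.filter fun j : Fin n =>
        y₁ < ((j:ℕ)+1)/(n:ℝ) ∧ ((j:ℕ)+1)/(n:ℝ) < y₂).card : ℝ) := by
  have hnpos : (0:ℝ) < n := by exact_mod_cast hn
  set L := ⌊(n:ℝ)*y₁⌋₊ + 1 with hL
  set U := ⌈(n:ℝ)*y₂⌉₊ with hU
  have hUn : U ≤ n := by
    rw [hU, Nat.ceil_le]
    push_cast
    nlinarith
  have hsub : Finset.Icc L (U-1) ⊆ (Finset.univ.filter fun j : Fin n =>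
      y₁ < ((j:ℕ)+1)/(n:ℝ) ∧ ((j:ℕ)+1)/(n:ℝ) < y₂).image (fun j : Fin n => (j:ℕ)+1) := by
    intro m hm
    rw [Finset.mem_Icc] at hm
    obtain ⟨hm1, hm2⟩ := hm
    have hm1' : 1 ≤ m := by omega
    have hmn : m - 1 < n := by omega
    have hcast : (((m - 1 : ℕ)):ℝ) + 1 = (m:ℝ) := by
      rw [Nat.cast_sub hm1']
      push_cast
      ring
    refine Finset.mem_image.mpr ⟨⟨m - 1, hmn⟩, ?_, by simp only [Fin.val_mk]; omega⟩
    simp only [Finset.mem_filter, Finset.mem_univ, true_and, Fin.val_mk]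
    rw [hcast]
    constructor
    · rw [lt_div_iff₀ hnpos]
      have h1 : (n:ℝ)*y₁ < L := by
        rw [hL]
        push_cast
        exact Nat.lt_floor_add_one _
      have h2 : (L:ℝ) ≤ (m:ℝ) := by exact_mod_cast hm1
      nlinarith
    · rw [div_lt_iff₀ hnpos]
      have h2 : m < U := by omega
      have h3 : (m:ℝ) < (n:ℝ)*y₂ := by
        have := (Nat.lt_ceil).mp h2
        linarith
      nlinarith
  have hcard : (Finset.Icc L (U-1)).card ≤ (Finset.univ.filter fun j : Fin n =>
      y₁ < ((j:ℕ)+1)/(n:ℝ) ∧ ((j:ℕ)+1)/(n:ℝ) < y₂).card :=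
    le_trans (Finset.card_le_card hsub) (Finset.card_image_le)
  have hU1 : 1 ≤ U := by
    rw [hU]
    have : (0:ℝ) < (n:ℝ)*y₂ := by nlinarith
    exact Nat.one_le_iff_ne_zero.mpr (by
      intro h
      rw [Nat.ceil_eq_zero] at h
      linarith)
  have hcount : (n:ℝ)*(y₂-y₁) - 1 ≤ ((Finset.Icc L (U-1)).card : ℝ) := by
    rw [Nat.card_Icc]
    have h1 : (U:ℝ) ≥ (n:ℝ)*y₂ := Nat.le_ceil _
    have h2 : ((L:ℝ)) ≤ (n:ℝ)*y₁ + 1 := by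
      rw [hL]
      push_cast
      have := Nat.floor_le (show (0:ℝ) ≤ (n:ℝ)*y₁ by positivity)
      linarith
    have h3 : ((U - 1 + 1 - L : ℕ):ℝ) ≥ (U:ℝ) - (L:ℝ) := by
      rcases le_or_gt L U with h | h
      · rw [show U - 1 + 1 = U from by omega, Nat.cast_sub h]
      · have hUL : ((U:ℝ)) < (L:ℝ) := by exact_mod_cast h
        have := Nat.cast_nonneg (α := ℝ) (U - 1 + 1 - L)
        linarith
    linarith
  calc (n:ℝ)*(y₂-y₁) - 1 ≤ ((Finset.Icc L (U-1)).card : ℝ) := hcount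
    _ ≤ _ := by exact_mod_cast hcard

open Classical in
lemma count_upper' {n : ℕ} (hn : 1 ≤ n) {y₁ y₂ : ℝ} (hy₁ : 0 ≤ y₁) (hy₁₂ : y₁ < y₂)
    (E : Fin n → Prop)
    (hE : ∀ j, E j ↔ (y₁ ≤ ((j:ℕ)+1)/(n:ℝ) ∧ ((j:ℕ)+1)/(n:ℝ) ≤ y₂)) :
    ((Finset.univ.filter (fun j => E j)).card : ℝ) ≤ (n:ℝ)*(y₂-y₁) + 1 := by
  have heq : Finset.univ.filter (fun j => E j) =
      Finset.univ.filter (fun j : Fin n => y₁ ≤ ((j:ℕ)+1)/(n:ℝ) ∧ ((j:ℕ)+1)/(n:ℝ) ≤ y₂) :=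
    Finset.filter_congr (fun x _ => hE x)
  rw [heq]
  exact count_upper hn hy₁ hy₁₂

open Classical in
lemma count_lower' {n : ℕ} (hn : 1 ≤ n) {y₁ y₂ : ℝ} (hy₁ : 0 ≤ y₁) (hy₁₂ : y₁ < y₂)
    (hy₂ : y₂ ≤ 1) (E : Fin n → Prop)
    (hE : ∀ j, E j ↔ (y₁ < ((j:ℕ)+1)/(n:ℝ) ∧ ((j:ℕ)+1)/(n:ℝ) < y₂)) :
    (n:ℝ)*(y₂-y₁) - 1 ≤ ((Finset.univ.filter (fun j => E j)).card : ℝ) := by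
  have heq : Finset.univ.filter (fun j => E j) =
      Finset.univ.filter (fun j : Fin n => y₁ < ((j:ℕ)+1)/(n:ℝ) ∧ ((j:ℕ)+1)/(n:ℝ) < y₂) :=
    Finset.filter_congr (fun x _ => hE x)
  rw [heq]
  exact count_lower hn hy₁ hy₁₂ hy₂

open Classical in
lemma upper_per_n {n : ℕ} (hn : 1 ≤ n) {q : ℝ} (hq : 0 < q) {aa : ℕ}
    (haa : 1 ≤ aa ∧ aa ≤ n) {y₁ y₂ : ℝ} (hy₁ : 0 ≤ y₁) (hy₁₂ : y₁ < y₂) :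
    mallowsProb n q (fun π => (permAct n π aa : ℝ)/(n:ℝ) ∈ Set.Icc y₁ y₂)
      ≤ ((y₂-y₁) + 1/(n:ℝ)) * (max q q⁻¹)^(n-1) := by
  have hnpos : (0:ℝ) < n := by exact_mod_cast hn
  set p : Fin n := ⟨aa - 1, by omega⟩ with hp
  set E : Fin n → Prop := fun j => y₁ ≤ ((j:ℕ)+1)/(n:ℝ) ∧ ((j:ℕ)+1)/(n:ℝ) ≤ y₂ with hE
  have hev : (fun π : Equiv.Perm (Fin n) => (permAct n π aa : ℝ)/(n:ℝ) ∈ Set.Icc y₁ y₂)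
      = fun π => E (π p) := by
    funext π
    rw [permAct, dif_pos haa]
    simp only [hE, Set.mem_Icc, eq_iff_iff]
    push_cast
    tauto
  rw [hev, prob_comp n q p E]
  set M := (max q q⁻¹) ^ (n-1) with hM
  have hMpos : (0:ℝ) < M := pow_pos (lt_of_lt_of_le one_pos (one_le_max_inv hq)) _
  refine le_trans (Finset.sum_le_sum fun j _ => marginal_le hn hq p j) ?_
  rw [Finset.sum_const, nsmul_eq_mul]
  refine le_trans (mul_le_mul_of_nonneg_right
    (count_upper' hn hy₁ hy₁₂ E (fun j => Iff.rfl)) (by positivity)) (le_of_eq ?_)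
  field_simp
  rw [hM, one_div]

open Classical in
lemma lower_per_n {n : ℕ} (hn : 1 ≤ n) {q : ℝ} (hq : 0 < q) {aa : ℕ}
    (haa : 1 ≤ aa ∧ aa ≤ n) {y₁ y₂ : ℝ} (hy₁ : 0 ≤ y₁) (hy₁₂ : y₁ < y₂) (hy₂ : y₂ ≤ 1) :
    ((y₂-y₁) - 1/(n:ℝ)) * ((max q q⁻¹)^(n-1))⁻¹
      ≤ mallowsProb n q (fun π => (permAct n π aa : ℝ)/(n:ℝ) ∈ Set.Ioo y₁ y₂) := by
  have hnpos : (0:ℝ) < n := by exact_mod_cast hn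
  set p : Fin n := ⟨aa - 1, by omega⟩ with hp
  set E : Fin n → Prop := fun j => y₁ < ((j:ℕ)+1)/(n:ℝ) ∧ ((j:ℕ)+1)/(n:ℝ) < y₂ with hE
  have hev : (fun π : Equiv.Perm (Fin n) => (permAct n π aa : ℝ)/(n:ℝ) ∈ Set.Ioo y₁ y₂)
      = fun π => E (π p) := by
    funext π
    rw [permAct, dif_pos haa]
    simp only [hE, Set.mem_Ioo, eq_iff_iff]
    push_cast
    tauto
  rw [hev, prob_comp n q p E]
  set M := (max q q⁻¹) ^ (n-1) with hM
  have hMpos : (0:ℝ) < M := pow_pos (lt_of_lt_of_le one_pos (one_le_max_inv hq)) _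
  refine le_trans ?_ (Finset.sum_le_sum fun j _ => marginal_ge hn hq p j)
  rw [Finset.sum_const, nsmul_eq_mul]
  refine le_trans (le_of_eq ?_) (mul_le_mul_of_nonneg_right
    (count_lower' hn hy₁ hy₁₂ hy₂ E (fun j => Iff.rfl)) (by positivity))
  field_simp
  rw [hM, one_div]

lemma slope_log_tendsto :
    Tendsto (fun x : ℝ => if x = 1 then 1 else Real.log x / (x - 1)) (nhds 1) (nhds 1) := by
  set f : ℝ → ℝ := fun x => if x = 1 then 1 else Real.log x / (x - 1) with hf
  have hd : HasDerivAt Real.log 1 1 := by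
    simpa using Real.hasDerivAt_log one_ne_zero
  rw [hasDerivAt_iff_tendsto_slope] at hd
  have h1 : Tendsto f (nhdsWithin 1 {(1:ℝ)}ᶜ) (nhds 1) := by
    refine hd.congr' ?_
    filter_upwards [self_mem_nhdsWithin] with x hx
    have hx1 : x ≠ 1 := hx
    rw [hf]
    simp only [if_neg hx1, slope_def_field, div_eq_div_iff]
    rw [Real.log_one]
    ring_nf
  have h2 : Tendsto f (pure (1:ℝ)) (nhds 1) := by
    rw [tendsto_pure_left]
    intro s hs
    have : f 1 = 1 := by simp [hf]
    rw [this]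
    exact mem_of_mem_nhds hs
  have := Tendsto.sup h1 h2
  rwa [nhdsNE_sup_pure] at this

lemma q_tendsto_one {q : ℕ → ℝ} {β : ℝ}
    (hβ : Tendsto (fun n : ℕ => (n : ℝ) * (1 - q n)) atTop (nhds β)) :
    Tendsto q atTop (nhds 1) := by
  have h0 : Tendsto (fun n : ℕ => ((n:ℝ)*(1 - q n)) * (1/(n:ℝ))) atTop (nhds (β * 0)) :=
    hβ.mul tendsto_one_div_atTop_nhds_zero_nat
  rw [mul_zero] at h0
  have h1 : Tendsto (fun n : ℕ => 1 - q n) atTop (nhds 0) := by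
    refine h0.congr' ?_
    filter_upwards [eventually_ge_atTop 1] with n hn
    have : (n:ℝ) ≠ 0 := by positivity
    field_simp
  have := (tendsto_const_nhds (x := (1:ℝ)) (f := atTop)).sub h1
  simpa using this

lemma nlog_tendsto {q : ℕ → ℝ} (hq : ∀ n, 0 < q n) {β : ℝ}
    (hβ : Tendsto (fun n : ℕ => (n : ℝ) * (1 - q n)) atTop (nhds β)) :
    Tendsto (fun n : ℕ => (n:ℝ) * Real.log (q n)) atTop (nhds (-β)) := by
  set f : ℝ → ℝ := fun x => if x = 1 then 1 else Real.log x / (x - 1) with hf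
  have hcomp : Tendsto (fun n => f (q n)) atTop (nhds 1) :=
    slope_log_tendsto.comp (q_tendsto_one hβ)
  have hmul : Tendsto (fun n : ℕ => (-((n:ℝ)*(1 - q n))) * f (q n)) atTop
      (nhds ((-β) * 1)) := hβ.neg.mul hcomp
  rw [mul_one] at hmul
  refine hmul.congr fun n => ?_
  rcases eq_or_ne (q n) 1 with h | h
  · simp [h]
  · rw [hf]
    simp only [if_neg h]
    have : q n - 1 ≠ 0 := sub_ne_zero.mpr h
    field_simp
    ring

lemma nsublog_tendsto {q : ℕ → ℝ} (hq : ∀ n, 0 < q n) {β : ℝ}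
    (hβ : Tendsto (fun n : ℕ => (n : ℝ) * (1 - q n)) atTop (nhds β)) :
    Tendsto (fun n : ℕ => ((n-1:ℕ):ℝ) * Real.log (q n)) atTop (nhds (-β)) := by
  have hlogq : Tendsto (fun n : ℕ => Real.log (q n)) atTop (nhds 0) := by
    have := (Real.continuousAt_log one_ne_zero).tendsto.comp (q_tendsto_one hβ)
    rw [Real.log_one] at this
    exact this
  have := (nlog_tendsto hq hβ).sub hlogq
  rw [sub_zero] at this
  refine this.congr' ?_
  filter_upwards [eventually_ge_atTop 1] with n hn
  rw [Nat.cast_sub hn]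
  push_cast
  ring

lemma max_pow_eq_exp {q : ℝ} (hq : 0 < q) (k : ℕ) :
    (max q q⁻¹) ^ k = Real.exp (|(k:ℝ) * Real.log q|) := by
  have hmax : max q q⁻¹ = Real.exp |Real.log q| := by
    rcases le_total 1 q with h | h
    · rw [abs_of_nonneg (Real.log_nonneg h), Real.exp_log hq]
      exact max_eq_left ((inv_le_one₀ hq).mpr h |>.trans h)
    · rw [abs_of_nonpos (Real.log_nonpos hq.le h), ← Real.log_inv, Real.exp_log (by positivity)]
      refine max_eq_right ?_
      calc q ≤ 1 := h
        _ ≤ q⁻¹ := (one_le_inv₀ hq).mpr h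
  rw [hmax, ← Real.exp_nat_mul, abs_mul, Nat.abs_cast]

lemma Mn_tendsto {q : ℕ → ℝ} (hq : ∀ n, 0 < q n) {β : ℝ}
    (hβ : Tendsto (fun n : ℕ => (n : ℝ) * (1 - q n)) atTop (nhds β)) :
    Tendsto (fun n : ℕ => (max (q n) (q n)⁻¹) ^ (n-1)) atTop (nhds (Real.exp |β|)) := by
  have habs : Tendsto (fun n : ℕ => |((n-1:ℕ):ℝ) * Real.log (q n)|) atTop (nhds |(-β)|) :=
    (nsublog_tendsto hq hβ).abs
  rw [abs_neg] at habs
  have := (Real.continuous_exp.continuousAt).tendsto.comp habs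
  refine this.congr fun n => ?_
  rw [Function.comp_apply, max_pow_eq_exp (hq n)]

lemma Mn_inv_tendsto {q : ℕ → ℝ} (hq : ∀ n, 0 < q n) {β : ℝ}
    (hβ : Tendsto (fun n : ℕ => (n : ℝ) * (1 - q n)) atTop (nhds β)) :
    Tendsto (fun n : ℕ => ((max (q n) (q n)⁻¹) ^ (n-1))⁻¹) atTop
      (nhds (Real.exp (-|β|))) := by
  have h := Mn_tendsto hq hβ
  have hne : Real.exp |β| ≠ 0 := (Real.exp_pos _).ne'
  have := h.inv₀ hne
  rwa [← Real.exp_neg] at this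

/-- **Lemma 3.4.** Under `n(1-qₙ) → β`, for any sequence `aₙ ∈ {1,…,n}` and any
`0 ≤ y₁ < y₂ ≤ 1`:
`limsupₙ μ_{n,qₙ}(π(aₙ)/n ∈ [y₁,y₂]) ≤ (y₂−y₁)·e^{|β|}` and
`liminfₙ μ_{n,qₙ}(π(aₙ)/n ∈ (y₁,y₂)) ≥ (y₂−y₁)·e^{−|β|}`. -/
theorem mallows_interval_probability_bounds
    (q : ℕ → ℝ) (hq : ∀ n, 0 < q n) (β : ℝ)
    (hβ : Tendsto (fun n : ℕ => (n : ℝ) * (1 - q n)) atTop (nhds β))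
    (a : ℕ → ℕ) (ha : ∀ n : ℕ, 1 ≤ n → 1 ≤ a n ∧ a n ≤ n)
    (y₁ y₂ : ℝ) (hy₁ : 0 ≤ y₁) (hy₁₂ : y₁ < y₂) (hy₂ : y₂ ≤ 1) :
    Filter.limsup (fun n : ℕ =>
        mallowsProb n (q n) (fun π => (permAct n π (a n) : ℝ) / n ∈ Set.Icc y₁ y₂)) atTop
      ≤ (y₂ - y₁) * Real.exp |β| ∧
    (y₂ - y₁) * Real.exp (-|β|)
      ≤ Filter.liminf (fun n : ℕ =>
          mallowsProb n (q n) (fun π => (permAct n π (a n) : ℝ) / n ∈ Set.Ioo y₁ y₂)) atTop := by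
  set A : ℕ → ℝ := fun n =>
    mallowsProb n (q n) (fun π => (permAct n π (a n) : ℝ) / n ∈ Set.Icc y₁ y₂) with hA
  set B : ℕ → ℝ := fun n =>
    mallowsProb n (q n) (fun π => (permAct n π (a n) : ℝ) / n ∈ Set.Ioo y₁ y₂) with hB
  set c : ℕ → ℝ := fun n => ((y₂-y₁) + 1/(n:ℝ)) * (max (q n) (q n)⁻¹)^(n-1) with hc
  set c' : ℕ → ℝ := fun n => ((y₂-y₁) - 1/(n:ℝ)) * ((max (q n) (q n)⁻¹)^(n-1))⁻¹ with hc'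
  have htc : Tendsto c atTop (nhds ((y₂-y₁) * Real.exp |β|)) := by
    have h1 : Tendsto (fun n : ℕ => (y₂-y₁) + 1/(n:ℝ)) atTop (nhds ((y₂-y₁) + 0)) :=
      tendsto_const_nhds.add tendsto_one_div_atTop_nhds_zero_nat
    rw [add_zero] at h1
    exact h1.mul (Mn_tendsto hq hβ)
  have htc' : Tendsto c' atTop (nhds ((y₂-y₁) * Real.exp (-|β|))) := by
    have h1 : Tendsto (fun n : ℕ => (y₂-y₁) - 1/(n:ℝ)) atTop (nhds ((y₂-y₁) - 0)) :=
      tendsto_const_nhds.sub tendsto_one_div_atTop_nhds_zero_nat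
    rw [sub_zero] at h1
    exact h1.mul (Mn_inv_tendsto hq hβ)
  have hAc : ∀ᶠ n in atTop, A n ≤ c n := by
    filter_upwards [eventually_ge_atTop 1] with n hn
    exact upper_per_n hn (hq n) (ha n hn) hy₁ hy₁₂
  have hc'B : ∀ᶠ n in atTop, c' n ≤ B n := by
    filter_upwards [eventually_ge_atTop 1] with n hn
    exact lower_per_n hn (hq n) (ha n hn) hy₁ hy₁₂ hy₂
  constructor
  · calc Filter.limsup A atTop ≤ Filter.limsup c atTop :=
        Filter.limsup_le_limsup hAc
          (isCoboundedUnder_le_of_le atTop (fun n => mallowsProb_nonneg (hq n) _))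
          htc.isBoundedUnder_le
      _ = (y₂-y₁) * Real.exp |β| := htc.limsup_eq
  · calc (y₂-y₁) * Real.exp (-|β|) = Filter.liminf c' atTop := htc'.liminf_eq.symm
      _ ≤ Filter.liminf B atTop :=
        Filter.liminf_le_liminf hc'B
          htc'.isBoundedUnder_ge
          (isCoboundedUnder_ge_of_le atTop (fun n => mallowsProb_le_one (hq n) _))
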